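/- There exists a pair of random variables (X_1, X_2)—for instance uniform on {(2,1),(4,2),(1,3),(3,4)}—such that for every t > 0 the indicator variables χ_1(t) = Ind(X_1 > t) and χ_2(t) = Ind(X_2 > t) are exchangeable (Pr(χ(t)=(1,0)) = Pr(χ(t)=(0,1)) for all t), but X_1 and X_2 are not exchangeable (e.g., Pr(X_1 ≤ 1.5, X_2 ≤ 2.5) ≠ Pr(X_1 ≤ 2.5, X_2 ≤ 1.5)). -/

import Mathlib

open MeasureTheory
open scoped ProbabilityTheory ENNReal

/-- There is a pair of random lifetimes `(X₁, X₂)` whose state indicators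
`χ_i(t) = Ind(X_i > t)` are exchangeable at every time `t > 0`
(`Pr(χ(t) = (1,0)) = Pr(χ(t) = (0,1))`), yet `(X₁, X₂)` is not exchangeable:
`Pr(X₁ ≤ 1.5, X₂ ≤ 2.5) ≠ Pr(X₁ ≤ 2.5, X₂ ≤ 1.5)`. -/
theorem stmt_11 :
    ∃ (Ω : Type) (_ : MeasureSpace Ω) (_ : IsProbabilityMeasure (ℙ : Measure Ω))
      (X₁ X₂ : Ω → ℝ),
      (∀ t : ℝ, 0 < t →
        ℙ {ω | t < X₁ ω ∧ ¬ t < X₂ ω} = ℙ {ω | ¬ t < X₁ ω ∧ t < X₂ ω}) ∧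
      ℙ {ω | X₁ ω ≤ (1.5 : ℝ) ∧ X₂ ω ≤ (2.5 : ℝ)} ≠
        ℙ {ω | X₁ ω ≤ (2.5 : ℝ) ∧ X₂ ω ≤ (1.5 : ℝ)} := by
  classical
  letI : MeasureSpace (Fin 4) := ⟨(PMF.uniformOfFintype (Fin 4)).toMeasure⟩
  refine ⟨Fin 4, inferInstance,
    PMF.toMeasure.isProbabilityMeasure _, ![2, 4, 1, 3], ![1, 2, 3, 4], ?_, ?_⟩
  · intro t ht
    have key : ∀ (S : Set (Fin 4)), ℙ S =
        ∑ a : Fin 4, S.indicator (fun _ => ((4 : ℝ≥0∞))⁻¹) a := by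
      intro S
      rw [show (ℙ : Measure (Fin 4)) = (PMF.uniformOfFintype (Fin 4)).toMeasure from rfl,
        PMF.toMeasure_apply_fintype _ _]
      simp [PMF.uniformOfFintype_apply, Set.indicator_apply]
    rw [key, key]
    simp only [Set.indicator_apply, Set.mem_setOf_eq, Fin.sum_univ_four]
    simp only [Matrix.cons_val_zero, Matrix.cons_val_one, Matrix.head_cons,
      Matrix.cons_val_two, Matrix.tail_cons, Matrix.cons_val_three]
    by_cases h1 : t < 1 <;> by_cases h2 : t < 2 <;> by_cases h3 : t < 3 <;>
      by_cases h4 : t < 4 <;>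
      simp [h1, h2, h3, h4] <;> linarith
  · have key : ∀ (S : Set (Fin 4)), ℙ S =
        ∑ a : Fin 4, S.indicator (fun _ => ((4 : ℝ≥0∞))⁻¹) a := by
      intro S
      rw [show (ℙ : Measure (Fin 4)) = (PMF.uniformOfFintype (Fin 4)).toMeasure from rfl,
        PMF.toMeasure_apply_fintype _ _]
      simp [PMF.uniformOfFintype_apply, Set.indicator_apply]
    rw [key, key]
    simp only [Set.indicator_apply, Set.mem_setOf_eq, Fin.sum_univ_four]
    simp only [Matrix.cons_val_zero, Matrix.cons_val_one, Matrix.head_cons,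
      Matrix.cons_val_two, Matrix.tail_cons, Matrix.cons_val_three]
    norm_num
    exact (ENNReal.inv_ne_zero.mpr (by norm_num)).symm
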